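/- Let two banks i, j have assets A_i, A_j > 0 and leverage ratios satisfying 0 < θ̄ < θ_j < θ_i < 1, and set the zero-shock demands s_k = A_k·(θ̄ − θ_k)/θ̄ < 0 for k ∈ {i, j}. For each β > 0 let (x_i(β), x_j(β)) be the unique clustered clearing equilibrium of the two-bank system. Then there exists a unique threshold β* > 0 such that x_j(β*) = 0; moreover x_j(β) < 0 for all 0 < β < β*, and x_j(β) > 0 for all β > β*. -/

import Mathlib

set_option maxHeartbeats 2000000 in
/-- Item 1 of Proposition 3 (Type-3 Homophily Transition): in the two-bank
zero-shock system with `θ̄ < θ_j < θ_i`, there is a unique market-liquidity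
threshold `β* > 0` at which the low-leverage bank's equilibrium liquidation
vanishes; below it the bank creates credit, above it the bank sells assets. -/
theorem liquidity_threshold_for_low_leverage_bank
    (Ai Aj : ℝ) (hAi : 0 < Ai) (hAj : 0 < Aj)
    (θbar θi θj : ℝ) (h0 : 0 < θbar) (h1 : θbar < θj) (h2 : θj < θi) (h3 : θi < 1)
    (si sj : ℝ) (hsi : si = Ai * (θbar - θi) / θbar) (hsj : sj = Aj * (θbar - θj) / θbar)
    (xi xj : ℝ → ℝ)
    (hxi : ∀ β : ℝ, 0 < β →
      si = xi β + (1 - Real.exp (-β * (xi β + xj β))) * Ai)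
    (hxj : ∀ β : ℝ, 0 < β →
      sj = xj β + (1 - Real.exp (-β * (xi β + xj β))) * Aj) :
    ∃! βstar : ℝ, 0 < βstar ∧ xj βstar = 0 ∧
      (∀ β : ℝ, 0 < β → β < βstar → xj β < 0) ∧
      (∀ β : ℝ, βstar < β → 0 < xj β) := by
  have hθbar_ne : θbar ≠ 0 := ne_of_gt h0
  set c : ℝ := θj / θbar with hc
  have hc_pos : 0 < c := div_pos (h0.trans h1) h0
  have hc1 : 1 < c := (one_lt_div h0).mpr h1
  set Sstar : ℝ := Ai * (θj - θi) / θbar with hSs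
  have hSstar_neg : Sstar < 0 :=
    div_neg_of_neg_of_pos (mul_neg_of_pos_of_neg hAi (by linarith)) h0
  have hSne : Sstar ≠ 0 := ne_of_lt hSstar_neg
  set B : ℝ := Real.log c / (-Sstar) with hB
  have hB_pos : 0 < B := div_pos (Real.log_pos hc1) (neg_pos.mpr hSstar_neg)
  have hprod : B * Sstar = -Real.log c := by
    rw [hB, div_mul_eq_mul_div, div_neg, mul_div_assoc, div_self hSne, mul_one]
  -- main sign lemma
  have main : ∀ β : ℝ, 0 < β →
      (β < B → xj β < 0) ∧ (β = B → xj β = 0) ∧ (B < β → 0 < xj β) := by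
    intro β hβ
    have e1 := hxi β hβ
    have e2 := hxj β hβ
    set E : ℝ := Real.exp (-β * (xi β + xj β)) with hE
    have hxjf : xj β = Aj * (E - c) := by
      rw [hsj] at e2
      field_simp [hc] at e2 ⊢
      have hcθ : c * θbar = θj := by rw [hc]; exact div_mul_cancel₀ θj hθbar_ne
      apply mul_left_cancel₀ hθbar_ne
      linear_combination -e2 + Aj * hcθ
    have hdiff : (xi β + xj β) - Sstar = (E - c) * (Ai + Aj) := by
      rw [hsi] at e1; rw [hsj] at e2
      field_simp [hSs, hc] at e1 e2 ⊢
      have hcθ : c * θbar = θj := by rw [hc]; exact div_mul_cancel₀ θj hθbar_ne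
      have hSθ : Sstar * θbar = Ai * (θj - θi) := by rw [hSs]; exact div_mul_cancel₀ _ hθbar_ne
      apply mul_left_cancel₀ hθbar_ne
      linear_combination -e1 - e2 - hSθ + (Ai + Aj) * hcθ
    have hElt : ∀ _ : β * (xi β + xj β) < B * Sstar, c < E := by
      intro h
      have : Real.exp (Real.log c) < Real.exp (-(β * (xi β + xj β))) := by
        apply Real.exp_lt_exp.mpr; linarith [hprod]
      rw [Real.exp_log hc_pos] at this
      have : c < Real.exp (-β * (xi β + xj β)) := by rw [neg_mul]; exact this
      exact this
    have hEgt : ∀ _ : B * Sstar < β * (xi β + xj β), E < c := by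
      intro h
      have : Real.exp (-(β * (xi β + xj β))) < Real.exp (Real.log c) := by
        apply Real.exp_lt_exp.mpr; linarith [hprod]
      rw [Real.exp_log hc_pos] at this
      have : Real.exp (-β * (xi β + xj β)) < c := by rw [neg_mul]; exact this
      exact this
    refine ⟨?_, ?_, ?_⟩
    · intro hlt
      -- β < B : show xj β < 0, i.e. E < c
      by_contra hcon
      push_neg at hcon
      have hEc : c ≤ E := by
        by_contra hx
        push_neg at hx
        have : xj β < 0 := by rw [hxjf]; nlinarith
        linarith
      -- then S ≥ Sstar, so β*S ≥ β*Sstar > B*Sstar, so E < c, contradiction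
      have hS : Sstar ≤ xi β + xj β := by
        nlinarith [mul_nonneg (sub_nonneg.mpr hEc) (by linarith : (0:ℝ) ≤ Ai + Aj)]
      have h5 : B * Sstar < β * Sstar := mul_lt_mul_of_neg_right hlt hSstar_neg
      have h6 : β * Sstar ≤ β * (xi β + xj β) := mul_le_mul_of_nonneg_left hS hβ.le
      have := hEgt (by linarith)
      linarith
    · intro heq
      -- β = B : show E = c
      have h1' : ¬ (E < c) := by
        intro hx
        have hS : xi β + xj β < Sstar := by
          nlinarith [mul_neg_of_neg_of_pos (sub_neg.mpr hx) (by linarith : (0:ℝ) < Ai + Aj)]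
        have h5 : β * (xi β + xj β) < B * Sstar := by
          calc β * (xi β + xj β) < β * Sstar := mul_lt_mul_of_pos_left hS hβ
            _ = B * Sstar := by rw [heq]
        have := hElt h5
        linarith
      have h2' : ¬ (c < E) := by
        intro hx
        have hS : Sstar < xi β + xj β := by
          nlinarith [mul_pos (sub_pos.mpr hx) (by linarith : (0:ℝ) < Ai + Aj)]
        have h5 : B * Sstar < β * (xi β + xj β) := by
          calc B * Sstar = β * Sstar := by rw [heq]
            _ < β * (xi β + xj β) := mul_lt_mul_of_pos_left hS hβ
        have := hEgt h5
        linarith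
      have : E = c := le_antisymm (not_lt.mp h2') (not_lt.mp h1')
      rw [hxjf, this]; ring
    · intro hgt
      -- B < β : show 0 < xj β, i.e. c < E
      by_contra hcon
      push_neg at hcon
      have hEc : E ≤ c := by
        by_contra hx
        push_neg at hx
        have : 0 < xj β := by rw [hxjf]; nlinarith
        linarith
      have hS : xi β + xj β ≤ Sstar := by
        have hp : (E - c) * (Ai + Aj) ≤ 0 :=
          mul_nonpos_of_nonpos_of_nonneg (by linarith) (by linarith)
        linarith
      have h5 : β * Sstar < B * Sstar := mul_lt_mul_of_neg_right hgt hSstar_neg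
      have h6 : β * (xi β + xj β) ≤ β * Sstar := mul_le_mul_of_nonneg_left hS hβ.le
      have := hElt (by linarith)
      linarith
  refine ⟨B, ⟨hB_pos, (main B hB_pos).2.1 rfl, ?_, ?_⟩, ?_⟩
  · intro β hβ hlt; exact (main β hβ).1 hlt
  · intro β hgt; exact (main β (hB_pos.trans hgt)).2.2 hgt
  · rintro β' ⟨hβ'pos, hzero, hlt, hgt⟩
    by_contra hne
    rcases lt_or_gt_of_ne hne with h | h
    · have := hgt B h
      have h0' := (main B hB_pos).2.1 rfl
      linarith
    · have := hlt B hB_pos h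
      have h0' := (main B hB_pos).2.1 rfl
      linarith
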